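/- Let M be an n × n 0-1 matrix with M_{1,n} = 1. Suppose the first row contains a 0 and let a₂ = (1, c) be its rightmost 0; suppose the last column contains a 0 and let a₃ = (r, n) be its topmost 0. If M_{r,c} = 0, then M contains a homogeneous staircase of length at least n − 1. -/

import Mathlib

set_option maxHeartbeats 1000000


/-- A step of a staircase: the next position is strictly to the right in the
same row, or strictly below in the same column. -/
def Step {n N : ℕ} (p q : Fin n × Fin N) : Prop :=
  (p.1 = q.1 ∧ p.2 < q.2) ∨ (p.2 = q.2 ∧ p.1 < q.1)

/-- A `v`-staircase in the 0-1 matrix `M`: a sequence of positions all holding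
the value `v`, each successive one strictly to the right in the same row or
strictly below in the same column of the previous one. -/
def IsStaircase {n N : ℕ} (M : Fin n → Fin N → Fin 2) (v : Fin 2)
    (L : List (Fin n × Fin N)) : Prop :=
  (∀ p ∈ L, M p.1 p.2 = v) ∧ L.Chain' Step

private lemma countP_split {α : Type*} (p q : α → Bool) (l : List α)
    (h : ∀ a ∈ l, p a = true → q a = false) :
    l.countP (fun a => p a || q a) = l.countP p + l.countP q := by
  induction l with
  | nil => simp
  | cons x xs ih =>
    have hx := h x (List.mem_cons_self)
    have ih' := ih (fun a ha => h a (List.mem_cons_of_mem _ ha))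
    simp only [List.countP_cons, ih']
    cases hp : p x <;> cases hq : q x <;> simp [hp, hq] at hx ⊢ <;> omega

private lemma chain'_map_filter {n : ℕ} {β : Type*} {R : β → β → Prop}
    (p : Fin n → Bool) (f : Fin n → β)
    (hf : ∀ a b : Fin n, a < b → R (f a) (f b)) :
    (((List.finRange n).filter p).map f).Chain' R :=
  (List.pairwise_map.mpr
    (((List.pairwise_lt_finRange n).filter p).imp (fun h => hf _ _ h))).isChain

private lemma countP_eq_add_one {n : ℕ} (q p : Fin n → Bool) (x : Fin n)
    (hiff : ∀ j : Fin n, q j = true ↔ (p j = true ∨ j = x))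
    (hdisj : ∀ j : Fin n, p j = true → j ≠ x) :
    (List.finRange n).countP q = (List.finRange n).countP p + 1 := by
  have hcongr : (List.finRange n).countP q =
      (List.finRange n).countP (fun j => p j || (j == x)) := by
    apply List.countP_congr
    intro j _
    simp only [Bool.or_eq_true, beq_iff_eq]
    exact hiff j
  rw [hcongr, countP_split p (fun j => j == x) _
      (by intro a _ ha; simpa using hdisj a ha)]
  congr 1
  have hcnt : ((List.finRange n).countP fun j => j == x) =
      (List.finRange n).count x := rfl
  rw [hcnt, List.count_eq_one_of_mem (List.nodup_finRange n) (List.mem_finRange x)]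

private lemma countP_total {n : ℕ} (f : Fin n → Fin 2) :
    ((List.finRange n).countP fun j => decide (f j = 0)) +
    ((List.finRange n).countP fun j => decide (f j = 1)) = n := by
  have fin2 : ∀ v : Fin 2, v ≠ 0 → v = 1 := by decide
  have hs := countP_split (fun j => decide (f j = 0)) (fun j => decide (f j = 1))
      (List.finRange n) (by
        intro a _ h
        simp only [decide_eq_true_eq] at h
        simp [h])
  have htot : ((List.finRange n).countP
      fun j => decide (f j = 0) || decide (f j = 1)) = n := by
    have : ((List.finRange n).countP
        fun j => decide (f j = 0) || decide (f j = 1)) =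
        ((List.finRange n).countP fun _ => true) := by
      apply List.countP_congr
      intro j _
      simp only [Bool.or_eq_true, decide_eq_true_eq, iff_true]
      rcases eq_or_ne (f j) 0 with h | h
      · exact Or.inl h
      · exact Or.inr (fin2 _ h)
    rw [this, List.countP_true, List.length_finRange]
  rw [hs] at htot
  omega

/-- Let M be an n × n 0-1 matrix with M_(1,n) = 1, let (1,c) be the rightmost 0
of the first row and (r,n) the topmost 0 of the last column. If M_(r,c) = 0,
then M contains a homogeneous staircase of length at least n − 1. -/
theorem stmt10 (n : ℕ) (hn : 0 < n) (M : Fin n → Fin n → Fin 2)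
    (h1 : M ⟨0, hn⟩ ⟨n - 1, by omega⟩ = 1)
    (c r : Fin n)
    (hc : M ⟨0, hn⟩ c = 0) (hcmax : ∀ j : Fin n, c < j → M ⟨0, hn⟩ j ≠ 0)
    (hr : M r ⟨n - 1, by omega⟩ = 0)
    (hrmin : ∀ i : Fin n, i < r → M i ⟨n - 1, by omega⟩ ≠ 0)
    (h4 : M r c = 0) :
    ∃ (v : Fin 2) (L : List (Fin n × Fin n)),
      IsStaircase M v L ∧ n - 1 ≤ L.length := by
  have hn1 : n - 1 < n := by omega
  set top : Fin n := ⟨0, hn⟩ with htop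
  set lastc : Fin n := ⟨n - 1, hn1⟩ with hlastc
  have h1' : M top lastc = 1 := h1
  have hr' : M r lastc = 0 := hr
  have hrmin' : ∀ i : Fin n, i < r → M i lastc ≠ 0 := hrmin
  -- basic position facts
  have h0r : top < r := by
    rcases Nat.eq_zero_or_pos r.val with h | h
    · exfalso
      have hrt : r = top := Fin.ext (by simp [htop, h])
      rw [hrt, h1'] at hr'
      exact absurd hr' (by decide)
    · exact Fin.lt_def.mpr (by simpa [htop] using h)
  have hclt : c < lastc := by
    have hne : c.val ≠ n - 1 := by
      intro hv
      have hcl : c = lastc := Fin.ext (by simp [hlastc, hv])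
      rw [hcl, h1'] at hc
      exact absurd hc (by decide)
    have := c.isLt
    exact Fin.lt_def.mpr (by simp only [hlastc]; omega)
  -- predicates
  set p0r : Fin n → Bool := fun j => decide (M top j = 0 ∧ j < c) with hp0r
  set p1r : Fin n → Bool := fun j => decide (M top j = 1 ∧ j < lastc) with hp1r
  set p1c : Fin n → Bool := fun i => decide (M i lastc = 1 ∧ top < i) with hp1c
  set p0c : Fin n → Bool := fun i => decide (M i lastc = 0 ∧ r < i) with hp0c
  -- the four filtered lists
  set A : List (Fin n × Fin n) :=
    ((List.finRange n).filter p0r).map (fun j => (top, j)) with hA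
  set B : List (Fin n × Fin n) :=
    ((List.finRange n).filter p0c).map (fun i => (i, lastc)) with hB
  set C : List (Fin n × Fin n) :=
    ((List.finRange n).filter p1r).map (fun j => (top, j)) with hC
  set D : List (Fin n × Fin n) :=
    ((List.finRange n).filter p1c).map (fun i => (i, lastc)) with hD
  set L0 : List (Fin n × Fin n) := A ++ (top, c) :: (r, c) :: (r, lastc) :: B with hL0
  set L1 : List (Fin n × Fin n) := C ++ (top, lastc) :: D with hL1
  -- counting
  have row0 : ((List.finRange n).countP fun j => decide (M top j = 0)) =
      (List.finRange n).countP p0r + 1 := by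
    apply countP_eq_add_one _ _ c
    · intro j
      simp only [hp0r, decide_eq_true_eq]
      constructor
      · intro h0
        rcases lt_or_eq_of_le (le_of_not_gt (fun hlt => hcmax j hlt h0)) with h | h
        · exact Or.inl ⟨h0, h⟩
        · exact Or.inr h
      · rintro (⟨h0, _⟩ | rfl)
        · exact h0
        · exact hc
    · intro j hj
      simp only [hp0r, decide_eq_true_eq] at hj
      exact Fin.ne_of_lt hj.2
  have row1 : ((List.finRange n).countP fun j => decide (M top j = 1)) =
      (List.finRange n).countP p1r + 1 := by
    apply countP_eq_add_one _ _ lastc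
    · intro j
      simp only [hp1r, decide_eq_true_eq]
      constructor
      · intro h0
        have hjle : j ≤ lastc := by
          have := j.isLt
          exact Fin.le_def.mpr (by simp only [hlastc]; omega)
        rcases lt_or_eq_of_le hjle with h | h
        · exact Or.inl ⟨h0, h⟩
        · exact Or.inr h
      · rintro (⟨h0, _⟩ | rfl)
        · exact h0
        · exact h1'
    · intro j hj
      simp only [hp1r, decide_eq_true_eq] at hj
      exact Fin.ne_of_lt hj.2
  have col1 : ((List.finRange n).countP fun i => decide (M i lastc = 1)) =
      (List.finRange n).countP p1c + 1 := by
    apply countP_eq_add_one _ _ top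
    · intro i
      simp only [hp1c, decide_eq_true_eq]
      constructor
      · intro h0
        have hle : top ≤ i := Fin.le_def.mpr (by simp [htop])
        rcases lt_or_eq_of_le hle with h | h
        · exact Or.inl ⟨h0, h⟩
        · exact Or.inr h.symm
      · rintro (⟨h0, _⟩ | rfl)
        · exact h0
        · exact h1'
    · intro i hi
      simp only [hp1c, decide_eq_true_eq] at hi
      exact (Fin.ne_of_lt hi.2).symm
  have col0 : ((List.finRange n).countP fun i => decide (M i lastc = 0)) =
      (List.finRange n).countP p0c + 1 := by
    apply countP_eq_add_one _ _ r
    · intro i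
      simp only [hp0c, decide_eq_true_eq]
      constructor
      · intro h0
        have hle : r ≤ i := le_of_not_gt (fun hlt => hrmin' i hlt h0)
        rcases lt_or_eq_of_le hle with h | h
        · exact Or.inl ⟨h0, h⟩
        · exact Or.inr h.symm
      · rintro (⟨h0, _⟩ | rfl)
        · exact h0
        · exact hr'
    · intro i hi
      simp only [hp0c, decide_eq_true_eq] at hi
      exact (Fin.ne_of_lt hi.2).symm
  have hrowtot := countP_total (fun j => M top j)
  have hcoltot := countP_total (fun i => M i lastc)
  -- lengths
  have lenA : A.length = (List.finRange n).countP p0r := by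
    rw [hA, List.length_map, ← List.countP_eq_length_filter]
  have lenB : B.length = (List.finRange n).countP p0c := by
    rw [hB, List.length_map, ← List.countP_eq_length_filter]
  have lenC : C.length = (List.finRange n).countP p1r := by
    rw [hC, List.length_map, ← List.countP_eq_length_filter]
  have lenD : D.length = (List.finRange n).countP p1c := by
    rw [hD, List.length_map, ← List.countP_eq_length_filter]
  have lenL0 : L0.length = A.length + 3 + B.length := by
    simp [hL0]; omega
  have lenL1 : L1.length = C.length + 1 + D.length := by
    simp [hL1]; omega
  have hsum : L0.length + L1.length = 2 * n := by omega
  -- membership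
  have mem0 : ∀ x ∈ L0, M x.1 x.2 = 0 := by
    intro x hx
    rw [hL0] at hx
    rcases List.mem_append.mp hx with hxa | hxr
    · rcases List.mem_map.mp hxa with ⟨j, hj, rfl⟩
      have hpj := (List.mem_filter.mp hj).2
      simp only [hp0r, decide_eq_true_eq] at hpj
      exact hpj.1
    · simp only [List.mem_cons] at hxr
      rcases hxr with rfl | rfl | rfl | hxb
      · exact hc
      · exact h4
      · exact hr'
      · rcases List.mem_map.mp hxb with ⟨i, hi, rfl⟩
        have hpi := (List.mem_filter.mp hi).2
        simp only [hp0c, decide_eq_true_eq] at hpi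
        exact hpi.1
  have mem1 : ∀ x ∈ L1, M x.1 x.2 = 1 := by
    intro x hx
    rw [hL1] at hx
    rcases List.mem_append.mp hx with hxa | hxr
    · rcases List.mem_map.mp hxa with ⟨j, hj, rfl⟩
      have hpj := (List.mem_filter.mp hj).2
      simp only [hp1r, decide_eq_true_eq] at hpj
      exact hpj.1
    · simp only [List.mem_cons] at hxr
      rcases hxr with rfl | hxb
      · exact h1'
      · rcases List.mem_map.mp hxb with ⟨i, hi, rfl⟩
        have hpi := (List.mem_filter.mp hi).2
        simp only [hp1c, decide_eq_true_eq] at hpi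
        exact hpi.1
  -- chains
  have chain0 : L0.Chain' Step := by
    rw [hL0]
    apply List.isChain_append.mpr
    refine ⟨chain'_map_filter p0r _ (fun a b hab => Or.inl ⟨rfl, hab⟩), ?_, ?_⟩
    · refine List.isChain_cons_cons.mpr ⟨Or.inr ⟨rfl, h0r⟩, ?_⟩
      refine List.isChain_cons_cons.mpr ⟨Or.inl ⟨rfl, hclt⟩, ?_⟩
      refine List.isChain_cons.mpr
        ⟨?_, chain'_map_filter p0c _ (fun a b hab => Or.inr ⟨rfl, hab⟩)⟩
      intro y hy
      have hyB : y ∈ ((List.finRange n).filter p0c).map (fun i => (i, lastc)) := by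
        rcases List.head?_eq_some_iff.mp hy with ⟨ys, hys⟩
        show y ∈ B
        rw [hys]
        exact List.mem_cons_self
      rcases List.mem_map.mp hyB with ⟨i, hi, rfl⟩
      have hpi := (List.mem_filter.mp hi).2
      simp only [hp0c, decide_eq_true_eq] at hpi
      exact Or.inr ⟨rfl, hpi.2⟩
    · intro x hx y hy
      have hxA : x ∈ ((List.finRange n).filter p0r).map (fun j => (top, j)) :=
        List.mem_of_getLast? hx
      rcases List.mem_map.mp hxA with ⟨j, hj, rfl⟩
      have hpj := (List.mem_filter.mp hj).2
      simp only [hp0r, decide_eq_true_eq] at hpj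
      have hy' : y = (top, c) := by
        simp only [List.head?_cons, Option.mem_def, Option.some.injEq] at hy
        exact hy.symm
      rw [hy']
      exact Or.inl ⟨rfl, hpj.2⟩
  have chain1 : L1.Chain' Step := by
    rw [hL1]
    apply List.isChain_append.mpr
    refine ⟨chain'_map_filter p1r _ (fun a b hab => Or.inl ⟨rfl, hab⟩), ?_, ?_⟩
    · refine List.isChain_cons.mpr
        ⟨?_, chain'_map_filter p1c _ (fun a b hab => Or.inr ⟨rfl, hab⟩)⟩
      intro y hy
      have hyD : y ∈ ((List.finRange n).filter p1c).map (fun i => (i, lastc)) := by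
        rcases List.head?_eq_some_iff.mp hy with ⟨ys, hys⟩
        show y ∈ D
        rw [hys]
        exact List.mem_cons_self
      rcases List.mem_map.mp hyD with ⟨i, hi, rfl⟩
      have hpi := (List.mem_filter.mp hi).2
      simp only [hp1c, decide_eq_true_eq] at hpi
      exact Or.inr ⟨rfl, hpi.2⟩
    · intro x hx y hy
      have hxC : x ∈ ((List.finRange n).filter p1r).map (fun j => (top, j)) :=
        List.mem_of_getLast? hx
      rcases List.mem_map.mp hxC with ⟨j, hj, rfl⟩
      have hpj := (List.mem_filter.mp hj).2
      simp only [hp1r, decide_eq_true_eq] at hpj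
      have hy' : y = (top, lastc) := by
        simp only [List.head?_cons, Option.mem_def, Option.some.injEq] at hy
        exact hy.symm
      rw [hy']
      exact Or.inl ⟨rfl, hpj.2⟩
  -- conclude
  rcases le_or_gt n L0.length with hbig | hsmall
  · exact ⟨0, L0, ⟨mem0, chain0⟩, by omega⟩
  · refine ⟨1, L1, ⟨mem1, chain1⟩, by omega⟩
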